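/- Let (Ω, μ) be a probability space, let 𝒳, 𝒜, 𝒜q, 𝒟 be finite types, let X, X̃ : Ω → 𝒳, δ : Ω → 𝒟, A⋆ : Ω → 𝒜 be measurable random variables, let π : 𝒳 → 𝒜 be any function, and let da : ℕ, R > 0, and 0 < s ≤ 2R be given. If qz : 𝒜 → 𝒜q is a quantizer whose codomain satisfies Fintype.card 𝒜q ≤ (2R / s)^{da}, then I[qz ∘ A⋆ : qz ∘ π ∘ X] + ( I[qz ∘ π ∘ X : qz ∘ π ∘ X̃] − I[qz ∘ π ∘ X : δ] ) ≤ da * Real.log (2R / s) + I[X : X̃]. -/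

import Mathlib

open MeasureTheory ProbabilityTheory

/-- Shannon entropy (in nats) of a random variable `X` taking values in a finite type,
with respect to the measure `μ`: `H[X] = - ∑ s, p(s) log p(s)` where `p(s) = μ (X ⁻¹' {s})`. -/
noncomputable def shannonEntropy {Ω : Type*} [MeasurableSpace Ω] {S : Type*} [Fintype S]
    (μ : Measure Ω) (X : Ω → S) : ℝ :=
  - ∑ s : S, (μ (X ⁻¹' {s})).toReal * Real.log (μ (X ⁻¹' {s})).toReal

/-- Mutual information (in nats) `I[X : Y] = H[X] + H[Y] - H[(X, Y)]`. -/
noncomputable def mutualInfo {Ω : Type*} [MeasurableSpace Ω] {S T : Type*} [Fintype S] [Fintype T]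
    (μ : Measure Ω) (X : Ω → S) (Y : Ω → T) : ℝ :=
  shannonEntropy μ X + shannonEntropy μ Y - shannonEntropy μ (fun ω => (X ω, Y ω))

/-- Conditional Shannon entropy `H[X | Z] = H[(X, Z)] - H[Z]`. -/
noncomputable def condEntropy' {Ω : Type*} [MeasurableSpace Ω] {S T : Type*} [Fintype S] [Fintype T]
    (μ : Measure Ω) (X : Ω → S) (Z : Ω → T) : ℝ :=
  shannonEntropy μ (fun ω => (X ω, Z ω)) - shannonEntropy μ Z

/-- Conditional mutual information `I[X : Y | Z] = H[X | Z] + H[Y | Z] - H[(X, Y) | Z]`. -/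
noncomputable def condMutualInfo' {Ω : Type*} [MeasurableSpace Ω] {S T U : Type*}
    [Fintype S] [Fintype T] [Fintype U]
    (μ : Measure Ω) (X : Ω → S) (Y : Ω → T) (Z : Ω → U) : ℝ :=
  condEntropy' μ X Z + condEntropy' μ Y Z - condEntropy' μ (fun ω => (X ω, Y ω)) Z

set_option linter.unusedSectionVars false
set_option linter.unusedVariables false
set_option maxHeartbeats 1000000

open Finset in
section
section PM
variable {Ω : Type*} [MeasurableSpace Ω] (μ : Measure Ω) [IsProbabilityMeasure μ]

/-- pmf of a random variable -/
noncomputable def pmv {S : Type*} (X : Ω → S) (s : S) : ℝ := (μ (X ⁻¹' {s})).toReal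

lemma pmv_nonneg {S : Type*} (X : Ω → S) (s : S) : 0 ≤ pmv μ X s := ENNReal.toReal_nonneg

/-- fiber decomposition -/
lemma pmv_comp {S T : Type*} [Fintype S] [DecidableEq T] [MeasurableSpace S]
    [MeasurableSingletonClass S] (W : Ω → S) (hW : Measurable W) (g : S → T) (t : T) :
    pmv μ (g ∘ W) t = ∑ s ∈ Finset.univ.filter (fun s => g s = t), pmv μ W s := by
  have hset : (g ∘ W) ⁻¹' {t} = ⋃ s ∈ Finset.univ.filter (fun s => g s = t), W ⁻¹' {s} := by
    ext ω
    simp [Set.mem_iUnion, Function.comp]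
  have hmeas : μ ((g ∘ W) ⁻¹' {t}) = ∑ s ∈ Finset.univ.filter (fun s => g s = t), μ (W ⁻¹' {s}) := by
    rw [hset]
    refine measure_biUnion_finset ?_ (fun s _ => hW (measurableSet_singleton s))
    intro a _ b _ hab
    exact Set.disjoint_left.2 (fun ω ha hb => hab (by
      have h1 : W ω = a := ha
      have h2 : W ω = b := hb
      rw [← h1, ← h2]))
  unfold pmv
  rw [hmeas, ENNReal.toReal_sum]
  exact fun s _ => measure_ne_top μ _

lemma pmv_sum_eq_one {S : Type*} [Fintype S] [MeasurableSpace S]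
    [MeasurableSingletonClass S] (W : Ω → S) (hW : Measurable W) :
    ∑ s : S, pmv μ W s = 1 := by
  classical
  have h := pmv_comp μ W hW (fun _ => ()) ()
  have h1 : pmv μ ((fun _ : S => ()) ∘ W) () = 1 := by
    unfold pmv
    have : ((fun _ : S => ()) ∘ W) ⁻¹' {()} = Set.univ := by
      ext ω; simp
    rw [this]; simp
  rw [h1] at h
  rw [h]
  apply Finset.sum_congr _ (fun _ _ => rfl)
  simp

end PM

section Marginal
variable {Ω : Type*} [MeasurableSpace Ω] (μ : Measure Ω) [IsProbabilityMeasure μ]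
variable {S T : Type*} [Fintype S] [Fintype T]
  [MeasurableSpace S] [MeasurableSingletonClass S]
  [MeasurableSpace T] [MeasurableSingletonClass T]

lemma pmv_marg_fst (X : Ω → S) (Y : Ω → T) (hX : Measurable X) (hY : Measurable Y) (x : S) :
    ∑ y : T, pmv μ (fun ω => (X ω, Y ω)) (x, y) = pmv μ X x := by
  classical
  have h := pmv_comp μ (fun ω => (X ω, Y ω)) (hX.prodMk hY) Prod.fst x
  have hXeq : Prod.fst ∘ (fun ω => (X ω, Y ω)) = X := rfl
  rw [hXeq] at h
  rw [h, Finset.sum_filter, Fintype.sum_prod_type]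
  rw [Finset.sum_comm]
  simp

lemma pmv_marg_snd (X : Ω → S) (Y : Ω → T) (hX : Measurable X) (hY : Measurable Y) (y : T) :
    ∑ x : S, pmv μ (fun ω => (X ω, Y ω)) (x, y) = pmv μ Y y := by
  classical
  have h := pmv_comp μ (fun ω => (X ω, Y ω)) (hX.prodMk hY) Prod.snd y
  have hYeq : Prod.snd ∘ (fun ω => (X ω, Y ω)) = Y := rfl
  rw [hYeq] at h
  rw [h, Finset.sum_filter, Fintype.sum_prod_type_right]
  rw [Finset.sum_comm]
  simp

lemma pmv_pair_le_fst (X : Ω → S) (Y : Ω → T) (hX : Measurable X) (hY : Measurable Y)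
    (x : S) (y : T) : pmv μ (fun ω => (X ω, Y ω)) (x, y) ≤ pmv μ X x := by
  rw [← pmv_marg_fst μ X Y hX hY x]
  exact Finset.single_le_sum (f := fun y' => pmv μ (fun ω => (X ω, Y ω)) (x, y'))
    (fun t _ => pmv_nonneg μ _ _) (Finset.mem_univ y)

lemma pmv_pair_le_snd (X : Ω → S) (Y : Ω → T) (hX : Measurable X) (hY : Measurable Y)
    (x : S) (y : T) : pmv μ (fun ω => (X ω, Y ω)) (x, y) ≤ pmv μ Y y := by
  rw [← pmv_marg_snd μ X Y hX hY y]
  exact Finset.single_le_sum (f := fun x' => pmv μ (fun ω => (X ω, Y ω)) (x', y))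
    (fun t _ => pmv_nonneg μ _ _) (Finset.mem_univ x)

end Marginal

/-- Gibbs' inequality. -/
lemma gibbs {S : Type*} [Fintype S] (p q : S → ℝ)
    (hp : ∀ s, 0 ≤ p s) (hq : ∀ s, 0 ≤ q s) (hpq : ∀ s, p s ≠ 0 → q s ≠ 0)
    (hq1 : ∑ s, q s ≤ 1) (hp1 : ∑ s, p s = 1) :
    - ∑ s, p s * Real.log (p s) ≤ - ∑ s, p s * Real.log (q s) := by
  rw [neg_le_neg_iff, ← sub_nonpos, ← Finset.sum_sub_distrib]
  calc ∑ s, (p s * Real.log (q s) - p s * Real.log (p s))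
      ≤ ∑ s, (q s - p s) := by
        refine Finset.sum_le_sum (fun s _ => ?_)
        rcases eq_or_lt_of_le (hp s) with h0 | h0
        · rw [← h0]; simpa using hq s
        · have hqs : 0 < q s := lt_of_le_of_ne (hq s) (Ne.symm (hpq s (ne_of_gt h0)))
          rw [← mul_sub, ← Real.log_div (ne_of_gt hqs) (ne_of_gt h0)]
          have hd : 0 < q s / p s := div_pos hqs h0
          calc p s * Real.log (q s / p s) ≤ p s * (q s / p s - 1) := by
                exact mul_le_mul_of_nonneg_left (Real.log_le_sub_one_of_pos hd) (le_of_lt h0)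
            _ = q s - p s := by field_simp
    _ = (∑ s, q s) - ∑ s, p s := Finset.sum_sub_distrib _ _
    _ ≤ 0 := by rw [hp1]; linarith

section Ent
variable {Ω : Type*} [MeasurableSpace Ω] (μ : Measure Ω) [IsProbabilityMeasure μ]
variable {S T U : Type*} [Fintype S] [Fintype T] [Fintype U]
  [MeasurableSpace S] [MeasurableSingletonClass S]
  [MeasurableSpace T] [MeasurableSingletonClass T]
  [MeasurableSpace U] [MeasurableSingletonClass U]

lemma shannonEntropy_eq (X : Ω → S) :
    shannonEntropy μ X = - ∑ s : S, pmv μ X s * Real.log (pmv μ X s) := rfl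

lemma pmv_congr {V : Ω → S} {W : Ω → T} {s : S} {t : T}
    (h : ∀ ω, V ω = s ↔ W ω = t) : pmv μ V s = pmv μ W t := by
  unfold pmv
  congr 1
  apply congrArg
  ext ω
  simpa using h ω

/-- `H[(X,Y)] ≥ H[Y]`. -/
lemma shannon_snd_le_pair (X : Ω → S) (Y : Ω → T) (hX : Measurable X) (hY : Measurable Y) :
    shannonEntropy μ Y ≤ shannonEntropy μ (fun ω => (X ω, Y ω)) := by
  rw [shannonEntropy_eq, shannonEntropy_eq, neg_le_neg_iff]
  have hrw : ∀ y : T, pmv μ Y y * Real.log (pmv μ Y y)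
      = ∑ x : S, pmv μ (fun ω => (X ω, Y ω)) (x, y) * Real.log (pmv μ Y y) := by
    intro y
    rw [← Finset.sum_mul, pmv_marg_snd μ X Y hX hY]
  calc ∑ p : S × T, pmv μ (fun ω => (X ω, Y ω)) p * Real.log (pmv μ (fun ω => (X ω, Y ω)) p)
      ≤ ∑ p : S × T, pmv μ (fun ω => (X ω, Y ω)) p * Real.log (pmv μ Y p.2) := by
        refine Finset.sum_le_sum (fun p _ => ?_)
        rcases eq_or_lt_of_le (pmv_nonneg μ (fun ω => (X ω, Y ω)) p) with h0 | h0
        · rw [← h0]; simp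
        · refine mul_le_mul_of_nonneg_left (Real.log_le_log h0 ?_) (le_of_lt h0)
          exact pmv_pair_le_snd μ X Y hX hY p.1 p.2
    _ = ∑ y : T, pmv μ Y y * Real.log (pmv μ Y y) := by
        rw [Fintype.sum_prod_type_right]
        exact Finset.sum_congr rfl (fun y _ => (hrw y).symm)

/-- `I[X:Y] ≤ H[X]`. -/
lemma mutualInfo_le_fst (X : Ω → S) (Y : Ω → T) (hX : Measurable X) (hY : Measurable Y) :
    mutualInfo μ X Y ≤ shannonEntropy μ X := by
  have := shannon_snd_le_pair μ X Y hX hY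
  unfold mutualInfo
  linarith

/-- `H[X] ≤ log |S|`. -/
lemma shannon_le_log_card (X : Ω → S) (hX : Measurable X) :
    shannonEntropy μ X ≤ Real.log (Fintype.card S) := by
  have hsum := pmv_sum_eq_one μ X hX
  have hne : Nonempty S := by
    by_contra h
    rw [not_nonempty_iff] at h
    rw [Finset.sum_eq_zero (fun s _ => (h.elim s))] at hsum
    norm_num at hsum
  have hcard : (0 : ℝ) < Fintype.card S := by
    have := Fintype.card_pos (α := S)
    exact_mod_cast this
  have hg := gibbs (pmv μ X) (fun _ => (Fintype.card S : ℝ)⁻¹)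
    (pmv_nonneg μ X) (fun _ => by positivity)
    (fun s _ => by positivity)
    (by rw [Finset.sum_const, Finset.card_univ]; rw [nsmul_eq_mul]; rw [mul_inv_cancel₀ (ne_of_gt hcard)])
    hsum
  rw [shannonEntropy_eq]
  refine le_trans hg ?_
  have : ∀ s : S, pmv μ X s * Real.log ((Fintype.card S : ℝ)⁻¹)
      = - (pmv μ X s * Real.log (Fintype.card S)) := by
    intro s
    rw [Real.log_inv]; ring
  rw [Finset.sum_congr rfl (fun s _ => this s), Finset.sum_neg_distrib, neg_neg,
    ← Finset.sum_mul, hsum, one_mul]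

end Ent

section Ent2
variable {Ω : Type*} [MeasurableSpace Ω] (μ : Measure Ω) [IsProbabilityMeasure μ]
variable {S T U : Type*} [Fintype S] [Fintype T] [Fintype U]
  [MeasurableSpace S] [MeasurableSingletonClass S]
  [MeasurableSpace T] [MeasurableSingletonClass T]
  [MeasurableSpace U] [MeasurableSingletonClass U]

lemma mutualInfo_nonneg (X : Ω → S) (Y : Ω → T) (hX : Measurable X) (hY : Measurable Y) :
    0 ≤ mutualInfo μ X Y := by
  set r := pmv μ (fun ω => (X ω, Y ω)) with hr
  have key : shannonEntropy μ (fun ω => (X ω, Y ω))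
      ≤ - ∑ p : S × T, r p * Real.log (pmv μ X p.1 * pmv μ Y p.2) := by
    rw [shannonEntropy_eq]
    refine gibbs r (fun p => pmv μ X p.1 * pmv μ Y p.2)
      (fun p => pmv_nonneg μ _ _)
      (fun p => mul_nonneg (pmv_nonneg μ _ _) (pmv_nonneg μ _ _))
      (fun p hp => ?_)
      ?_
      (pmv_sum_eq_one μ _ (hX.prodMk hY))
    · have h0 : 0 < r p := lt_of_le_of_ne (pmv_nonneg μ _ _) (Ne.symm hp)
      have h1 : 0 < pmv μ X p.1 := lt_of_lt_of_le h0 (pmv_pair_le_fst μ X Y hX hY p.1 p.2)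
      have h2 : 0 < pmv μ Y p.2 := lt_of_lt_of_le h0 (pmv_pair_le_snd μ X Y hX hY p.1 p.2)
      positivity
    · rw [Fintype.sum_prod_type]
      have : ∀ x : S, ∑ y : T, pmv μ X x * pmv μ Y y = pmv μ X x := by
        intro x
        rw [← Finset.mul_sum, pmv_sum_eq_one μ Y hY, mul_one]
      rw [Finset.sum_congr rfl (fun x _ => this x), pmv_sum_eq_one μ X hX]
  have expand : ∑ p : S × T, r p * Real.log (pmv μ X p.1 * pmv μ Y p.2)
      = (∑ s : S, pmv μ X s * Real.log (pmv μ X s)) + ∑ t : T, pmv μ Y t * Real.log (pmv μ Y t) := by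
    have term : ∀ p : S × T, r p * Real.log (pmv μ X p.1 * pmv μ Y p.2)
        = r p * Real.log (pmv μ X p.1) + r p * Real.log (pmv μ Y p.2) := by
      intro p
      rcases eq_or_ne (r p) 0 with h0 | h0
      · rw [h0]; ring
      · have h0' : 0 < r p := lt_of_le_of_ne (pmv_nonneg μ _ _) (Ne.symm h0)
        have h1 : pmv μ X p.1 ≠ 0 := ne_of_gt (lt_of_lt_of_le h0' (pmv_pair_le_fst μ X Y hX hY p.1 p.2))
        have h2 : pmv μ Y p.2 ≠ 0 := ne_of_gt (lt_of_lt_of_le h0' (pmv_pair_le_snd μ X Y hX hY p.1 p.2))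
        rw [Real.log_mul h1 h2]; ring
    rw [Finset.sum_congr rfl (fun p _ => term p), Finset.sum_add_distrib]
    congr 1
    · rw [Fintype.sum_prod_type]
      refine Finset.sum_congr rfl (fun x _ => ?_)
      have hb : ∑ y : T, r (x, y) * Real.log (pmv μ X (x, y).1)
          = ∑ y : T, r (x, y) * Real.log (pmv μ X x) := rfl
      rw [hb, ← Finset.sum_mul, pmv_marg_fst μ X Y hX hY]
    · rw [Fintype.sum_prod_type_right]
      refine Finset.sum_congr rfl (fun y _ => ?_)
      have hb : ∑ x : S, r (x, y) * Real.log (pmv μ Y (x, y).2)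
          = ∑ x : S, r (x, y) * Real.log (pmv μ Y y) := rfl
      rw [hb, ← Finset.sum_mul, pmv_marg_snd μ X Y hX hY]
  unfold mutualInfo
  rw [shannonEntropy_eq μ X, shannonEntropy_eq μ Y]
  have : - ∑ p : S × T, r p * Real.log (pmv μ X p.1 * pmv μ Y p.2)
      = (- ∑ s : S, pmv μ X s * Real.log (pmv μ X s)) + (- ∑ t : T, pmv μ Y t * Real.log (pmv μ Y t)) := by
    rw [expand]; ring
  rw [this] at key
  linarith

lemma shannon_swap (X : Ω → S) (Y : Ω → T) :
    shannonEntropy μ (fun ω => (Y ω, X ω)) = shannonEntropy μ (fun ω => (X ω, Y ω)) := by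
  rw [shannonEntropy_eq, shannonEntropy_eq, neg_inj]
  rw [← Equiv.sum_comp (Equiv.prodComm S T)]
  refine Finset.sum_congr rfl (fun p _ => ?_)
  have : pmv μ (fun ω => (Y ω, X ω)) ((Equiv.prodComm S T) p) = pmv μ (fun ω => (X ω, Y ω)) p := by
    refine pmv_congr μ (fun ω => ?_)
    cases p
    simp [Prod.ext_iff, and_comm]
  rw [this]

lemma shannon_det (V : Ω → S) (h : S → T) :
    shannonEntropy μ (fun ω => (V ω, h (V ω))) = shannonEntropy μ V := by
  classical
  have key : ∀ (v : S) (a : T), pmv μ (fun ω => (V ω, h (V ω))) (v, a)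
      = if a = h v then pmv μ V v else 0 := by
    intro v a
    rcases eq_or_ne a (h v) with ha | ha
    · rw [if_pos ha]
      refine pmv_congr μ (fun ω => ?_)
      constructor
      · intro hh; exact (Prod.mk.injEq _ _ _ _ ▸ hh).1
      · intro hh; subst hh; simp [ha]
    · rw [if_neg ha]
      unfold pmv
      have : (fun ω => (V ω, h (V ω))) ⁻¹' {(v, a)} = ∅ := by
        ext ω
        simp only [Set.mem_preimage, Set.mem_singleton_iff, Prod.mk.injEq, Set.mem_empty_iff_false,
          iff_false, not_and]
        intro hv
        rw [hv]
        exact fun hc => ha hc.symm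
      rw [this]
      simp
  rw [shannonEntropy_eq, shannonEntropy_eq, neg_inj, Fintype.sum_prod_type]
  refine Finset.sum_congr rfl (fun v _ => ?_)
  rw [Finset.sum_eq_single (h v)]
  · rw [key v (h v), if_pos rfl]
  · intro a _ ha
    rw [key v a, if_neg ha]
    simp
  · intro hh
    exact absurd (Finset.mem_univ _) hh

lemma mutualInfo_comm (X : Ω → S) (Y : Ω → T) :
    mutualInfo μ X Y = mutualInfo μ Y X := by
  unfold mutualInfo
  rw [shannon_swap μ X Y]
  ring

end Ent2

section Submod
variable {Ω : Type*} [MeasurableSpace Ω] (μ : Measure Ω) [IsProbabilityMeasure μ]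
variable {S T U : Type*} [Fintype S] [Fintype T] [Fintype U]
  [MeasurableSpace S] [MeasurableSingletonClass S]
  [MeasurableSpace T] [MeasurableSingletonClass T]
  [MeasurableSpace U] [MeasurableSingletonClass U]

lemma shannon_submod (X : Ω → S) (Y : Ω → T) (Z : Ω → U)
    (hX : Measurable X) (hY : Measurable Y) (hZ : Measurable Z) :
    shannonEntropy μ (fun ω => ((X ω, Y ω), Z ω)) + shannonEntropy μ Z
      ≤ shannonEntropy μ (fun ω => (X ω, Z ω)) + shannonEntropy μ (fun ω => (Y ω, Z ω)) := by
  classical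
  set r : (S × T) × U → ℝ := pmv μ (fun ω => ((X ω, Y ω), Z ω)) with hrdef
  set a : S × U → ℝ := pmv μ (fun ω => (X ω, Z ω)) with hadef
  set b : T × U → ℝ := pmv μ (fun ω => (Y ω, Z ω)) with hbdef
  set c : U → ℝ := pmv μ Z with hcdef
  have hXZ : Measurable (fun ω => (X ω, Z ω)) := hX.prodMk hZ
  have hYZ : Measurable (fun ω => (Y ω, Z ω)) := hY.prodMk hZ
  have htrip : Measurable (fun ω => ((X ω, Y ω), Z ω)) := (hX.prodMk hY).prodMk hZ
  -- marginals
  have m1 : ∀ (x : S) (z : U), ∑ y : T, r ((x, y), z) = a (x, z) := by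
    intro x z
    have hcong : ∀ y : T, r ((x, y), z) = pmv μ (fun ω => (Y ω, (X ω, Z ω))) (y, (x, z)) := by
      intro y
      refine pmv_congr μ (fun ω => ?_)
      simp only [Prod.mk.injEq]
      tauto
    rw [Finset.sum_congr rfl (fun y _ => hcong y)]
    exact pmv_marg_snd μ Y (fun ω => (X ω, Z ω)) hY hXZ (x, z)
  have m2 : ∀ (y : T) (z : U), ∑ x : S, r ((x, y), z) = b (y, z) := by
    intro y z
    have hcong : ∀ x : S, r ((x, y), z) = pmv μ (fun ω => (X ω, (Y ω, Z ω))) (x, (y, z)) := by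
      intro x
      refine pmv_congr μ (fun ω => ?_)
      simp only [Prod.mk.injEq]
      tauto
    rw [Finset.sum_congr rfl (fun x _ => hcong x)]
    exact pmv_marg_snd μ X (fun ω => (Y ω, Z ω)) hX hYZ (y, z)
  have m3 : ∀ z : U, ∑ st : S × T, r (st, z) = c z :=
    fun z => pmv_marg_snd μ (fun ω => (X ω, Y ω)) Z (hX.prodMk hY) hZ z
  have ma : ∀ z : U, ∑ x : S, a (x, z) = c z := fun z => pmv_marg_snd μ X Z hX hZ z
  have mb : ∀ z : U, ∑ y : T, b (y, z) = c z := fun z => pmv_marg_snd μ Y Z hY hZ z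
  -- pointwise bounds
  have rle_a : ∀ (x : S) (y : T) (z : U), r ((x, y), z) ≤ a (x, z) := by
    intro x y z
    rw [← m1 x z]
    exact Finset.single_le_sum (f := fun y' => r ((x, y'), z))
      (fun t _ => pmv_nonneg μ _ _) (Finset.mem_univ y)
  have rle_b : ∀ (x : S) (y : T) (z : U), r ((x, y), z) ≤ b (y, z) := by
    intro x y z
    rw [← m2 y z]
    exact Finset.single_le_sum (f := fun x' => r ((x', y), z))
      (fun t _ => pmv_nonneg μ _ _) (Finset.mem_univ x)
  have rle_c : ∀ (x : S) (y : T) (z : U), r ((x, y), z) ≤ c z := by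
    intro x y z
    rw [← m3 z]
    exact Finset.single_le_sum (f := fun st => r (st, z))
      (fun t _ => pmv_nonneg μ _ _) (Finset.mem_univ (x, y))
  set q : (S × T) × U → ℝ := fun p => a (p.1.1, p.2) * b (p.1.2, p.2) / c p.2 with hqdef
  have hqnn : ∀ p, 0 ≤ q p := fun p =>
    div_nonneg (mul_nonneg (pmv_nonneg μ _ _) (pmv_nonneg μ _ _)) (pmv_nonneg μ _ _)
  have key : shannonEntropy μ (fun ω => ((X ω, Y ω), Z ω))
      ≤ - ∑ p : (S × T) × U, r p * Real.log (q p) := by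
    rw [shannonEntropy_eq]
    refine gibbs r q (fun p => pmv_nonneg μ _ _) hqnn (fun p hp => ?_) ?_
      (pmv_sum_eq_one μ _ htrip)
    · obtain ⟨⟨x, y⟩, z⟩ := p
      have h0 : 0 < r ((x, y), z) := lt_of_le_of_ne (pmv_nonneg μ _ _) (Ne.symm hp)
      have ha : 0 < a (x, z) := lt_of_lt_of_le h0 (rle_a x y z)
      have hb : 0 < b (y, z) := lt_of_lt_of_le h0 (rle_b x y z)
      have hc : 0 < c z := lt_of_lt_of_le h0 (rle_c x y z)
      have : 0 < q ((x, y), z) := div_pos (mul_pos ha hb) hc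
      exact ne_of_gt this
    · have step : ∑ p : (S × T) × U, q p = ∑ z : U, c z * c z / c z := by
        rw [Fintype.sum_prod_type, Finset.sum_comm]
        refine Finset.sum_congr rfl (fun z _ => ?_)
        have : ∑ st : S × T, q (st, z) = ∑ x : S, ∑ y : T, a (x, z) * b (y, z) / c z := by
          rw [Fintype.sum_prod_type]
        rw [this]
        have inner : ∀ x : S, ∑ y : T, a (x, z) * b (y, z) / c z = a (x, z) * c z / c z := by
          intro x
          rw [← Finset.sum_div, ← Finset.mul_sum, mb z]
        rw [Finset.sum_congr rfl (fun x _ => inner x), ← Finset.sum_div, ← Finset.sum_mul, ma z]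
      rw [step]
      have : ∀ z : U, c z * c z / c z ≤ c z := by
        intro z
        rcases eq_or_ne (c z) 0 with h | h
        · rw [h]; simp
        · rw [mul_div_assoc, div_self h, mul_one]
      calc ∑ z : U, c z * c z / c z ≤ ∑ z : U, c z := Finset.sum_le_sum (fun z _ => this z)
        _ = 1 := pmv_sum_eq_one μ Z hZ
  -- expand -∑ r log q
  have expand : ∑ p : (S × T) × U, r p * Real.log (q p)
      = (∑ p : S × U, a p * Real.log (a p)) + (∑ p : T × U, b p * Real.log (b p))
        - ∑ z : U, c z * Real.log (c z) := by
    have term : ∀ p : (S × T) × U, r p * Real.log (q p)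
        = r p * Real.log (a (p.1.1, p.2)) + r p * Real.log (b (p.1.2, p.2))
          - r p * Real.log (c p.2) := by
      intro p
      obtain ⟨⟨x, y⟩, z⟩ := p
      rcases eq_or_ne (r ((x, y), z)) 0 with h0 | h0
      · rw [h0]; ring
      · have h0' : 0 < r ((x, y), z) := lt_of_le_of_ne (pmv_nonneg μ _ _) (Ne.symm h0)
        have ha : a (x, z) ≠ 0 := ne_of_gt (lt_of_lt_of_le h0' (rle_a x y z))
        have hb : b (y, z) ≠ 0 := ne_of_gt (lt_of_lt_of_le h0' (rle_b x y z))
        have hc : c z ≠ 0 := ne_of_gt (lt_of_lt_of_le h0' (rle_c x y z))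
        show r ((x, y), z) * Real.log (a (x, z) * b (y, z) / c z) = _
        rw [Real.log_div (mul_ne_zero ha hb) hc, Real.log_mul ha hb]
        ring
    have eA : ∑ p : (S × T) × U, r p * Real.log (a (p.1.1, p.2))
        = ∑ p : S × U, a p * Real.log (a p) := by
      have h1 : ∑ p : (S × T) × U, r p * Real.log (a (p.1.1, p.2))
          = ∑ x : S, ∑ y : T, ∑ z : U, r ((x, y), z) * Real.log (a (x, z)) := by
        rw [Fintype.sum_prod_type, Fintype.sum_prod_type]
      rw [h1, Fintype.sum_prod_type]
      refine Finset.sum_congr rfl (fun x _ => ?_)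
      rw [Finset.sum_comm]
      refine Finset.sum_congr rfl (fun z _ => ?_)
      rw [← Finset.sum_mul, m1 x z]
    have eB : ∑ p : (S × T) × U, r p * Real.log (b (p.1.2, p.2))
        = ∑ p : T × U, b p * Real.log (b p) := by
      have h1 : ∑ p : (S × T) × U, r p * Real.log (b (p.1.2, p.2))
          = ∑ x : S, ∑ y : T, ∑ z : U, r ((x, y), z) * Real.log (b (y, z)) := by
        rw [Fintype.sum_prod_type, Fintype.sum_prod_type]
      rw [h1, Finset.sum_comm, Fintype.sum_prod_type]
      refine Finset.sum_congr rfl (fun y _ => ?_)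
      rw [Finset.sum_comm]
      refine Finset.sum_congr rfl (fun z _ => ?_)
      rw [← Finset.sum_mul, m2 y z]
    have eC : ∑ p : (S × T) × U, r p * Real.log (c p.2)
        = ∑ z : U, c z * Real.log (c z) := by
      have h1 : ∑ p : (S × T) × U, r p * Real.log (c p.2)
          = ∑ st : S × T, ∑ z : U, r (st, z) * Real.log (c z) := by
        rw [Fintype.sum_prod_type]
      rw [h1, Finset.sum_comm]
      refine Finset.sum_congr rfl (fun z _ => ?_)
      rw [← Finset.sum_mul, m3 z]
    rw [Finset.sum_congr rfl (fun p _ => term p)]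
    rw [Finset.sum_sub_distrib, Finset.sum_add_distrib, eA, eB, eC]
  have hfin1 : shannonEntropy μ (fun ω => (X ω, Z ω)) = - ∑ p : S × U, a p * Real.log (a p) :=
    shannonEntropy_eq μ _
  have hfin2 : shannonEntropy μ (fun ω => (Y ω, Z ω)) = - ∑ p : T × U, b p * Real.log (b p) :=
    shannonEntropy_eq μ _
  have hfin3 : shannonEntropy μ Z = - ∑ z : U, c z * Real.log (c z) := shannonEntropy_eq μ _
  rw [expand] at key
  linarith
end Submod

section DPI
variable {Ω : Type*} [MeasurableSpace Ω] (μ : Measure Ω) [IsProbabilityMeasure μ]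
variable {S T S' : Type*} [Fintype S] [Fintype T] [Fintype S']
  [MeasurableSpace S] [MeasurableSingletonClass S]
  [MeasurableSpace T] [MeasurableSingletonClass T]
  [MeasurableSpace S'] [MeasurableSingletonClass S']

lemma dpi (X : Ω → S) (W : Ω → T) (hX : Measurable X) (hW : Measurable W) (f : S → S') :
    mutualInfo μ (fun ω => f (X ω)) W ≤ mutualInfo μ X W := by
  have hfX : Measurable (fun ω => f (X ω)) := (measurable_of_finite f).comp hX
  have hsub : shannonEntropy μ (fun ω => ((X ω, W ω), f (X ω)))
        + shannonEntropy μ (fun ω => f (X ω))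
      ≤ shannonEntropy μ (fun ω => (X ω, f (X ω)))
        + shannonEntropy μ (fun ω => (W ω, f (X ω))) :=
    shannon_submod μ X W (fun ω => f (X ω)) hX hW hfX
  have hd1 : shannonEntropy μ (fun ω => ((X ω, W ω), f (X ω)))
      = shannonEntropy μ (fun ω => (X ω, W ω)) :=
    shannon_det μ (fun ω => (X ω, W ω)) (fun p => f p.1)
  have hd2 : shannonEntropy μ (fun ω => (X ω, f (X ω))) = shannonEntropy μ X :=
    shannon_det μ X f
  have hsw : shannonEntropy μ (fun ω => (W ω, f (X ω)))
      = shannonEntropy μ (fun ω => (f (X ω), W ω)) :=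
    shannon_swap μ (fun ω => f (X ω)) W
  unfold mutualInfo
  linarith
end DPI

end

/-- **Corollary 4 (Continuous-action VLAs).** If the quantizer codomain satisfies
`|𝒜q| ≤ (2R/s)^da`, then the quantized policy obeys the Capability–Robustness bound
with budget `da · log(2R/s) + I[X : X̃]`. -/
theorem continuous_action_bound
    {Ω : Type*} [MeasurableSpace Ω] (μ : Measure Ω) [IsProbabilityMeasure μ]
    {𝒳 𝒜 𝒜q 𝒟 : Type*} [Fintype 𝒳] [Fintype 𝒜] [Fintype 𝒜q] [Fintype 𝒟]
    [MeasurableSpace 𝒳] [DiscreteMeasurableSpace 𝒳]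
    [MeasurableSpace 𝒜] [DiscreteMeasurableSpace 𝒜]
    [MeasurableSpace 𝒜q] [DiscreteMeasurableSpace 𝒜q]
    [MeasurableSpace 𝒟] [DiscreteMeasurableSpace 𝒟]
    (X Xtil : Ω → 𝒳) (δ : Ω → 𝒟) (Astar : Ω → 𝒜)
    (hX : Measurable X) (hXtil : Measurable Xtil) (hδ : Measurable δ)
    (hAstar : Measurable Astar)
    (π : 𝒳 → 𝒜)
    (da : ℕ) (R s : ℝ) (hR : 0 < R) (hs : 0 < s) (hs2R : s ≤ 2 * R)
    (qz : 𝒜 → 𝒜q)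
    (hcard : (Fintype.card 𝒜q : ℝ) ≤ (2 * R / s) ^ da) :
    mutualInfo μ (qz ∘ Astar) (qz ∘ π ∘ X)
        + (mutualInfo μ (qz ∘ π ∘ X) (qz ∘ π ∘ Xtil) - mutualInfo μ (qz ∘ π ∘ X) δ)
      ≤ da * Real.log (2 * R / s) + mutualInfo μ X Xtil := by

  have hA : Measurable (fun ω => qz (Astar ω)) := (measurable_of_finite qz).comp hAstar
  have hB : Measurable (fun ω => qz (π (X ω))) :=
    (measurable_of_finite (fun x => qz (π x))).comp hX
  have hC : Measurable (fun ω => qz (π (Xtil ω))) :=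
    (measurable_of_finite (fun x => qz (π x))).comp hXtil
  have h2Rs : (1 : ℝ) ≤ 2 * R / s := (one_le_div hs).2 hs2R
  have hlog : (0 : ℝ) ≤ Real.log (2 * R / s) := Real.log_nonneg h2Rs
  -- Step 1: I[A:B] ≤ da log(2R/s)
  have step1 : mutualInfo μ (fun ω => qz (Astar ω)) (fun ω => qz (π (X ω)))
      ≤ da * Real.log (2 * R / s) := by
    have h1 : mutualInfo μ (fun ω => qz (Astar ω)) (fun ω => qz (π (X ω)))
        ≤ shannonEntropy μ (fun ω => qz (Astar ω)) :=
      mutualInfo_le_fst μ _ _ hA hB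
    have h2 : shannonEntropy μ (fun ω => qz (Astar ω)) ≤ Real.log (Fintype.card 𝒜q) :=
      shannon_le_log_card μ _ hA
    have h3 : Real.log (Fintype.card 𝒜q) ≤ da * Real.log (2 * R / s) := by
      rcases Nat.eq_zero_or_pos (Fintype.card 𝒜q) with h0 | h0
      · rw [h0]
        simp
        positivity
      · have hcpos : (0 : ℝ) < Fintype.card 𝒜q := by exact_mod_cast h0
        calc Real.log (Fintype.card 𝒜q) ≤ Real.log ((2 * R / s) ^ da) :=
              Real.log_le_log hcpos hcard
          _ = da * Real.log (2 * R / s) := Real.log_pow (2 * R / s) da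
    linarith
  -- Step 2: DPI
  have step2 : mutualInfo μ (fun ω => qz (π (X ω))) (fun ω => qz (π (Xtil ω)))
      ≤ mutualInfo μ X Xtil := by
    have d1 : mutualInfo μ (fun ω => qz (π (X ω))) (fun ω => qz (π (Xtil ω)))
        ≤ mutualInfo μ X (fun ω => qz (π (Xtil ω))) :=
      dpi μ X (fun ω => qz (π (Xtil ω))) hX hC (fun x => qz (π x))
    have d2 : mutualInfo μ (fun ω => qz (π (Xtil ω))) X ≤ mutualInfo μ Xtil X :=
      dpi μ Xtil X hXtil hX (fun x => qz (π x))
    have c1 : mutualInfo μ X (fun ω => qz (π (Xtil ω)))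
        = mutualInfo μ (fun ω => qz (π (Xtil ω))) X := mutualInfo_comm μ _ _
    have c2 : mutualInfo μ Xtil X = mutualInfo μ X Xtil := mutualInfo_comm μ _ _
    linarith
  -- Step 3: nonnegativity
  have step3 : 0 ≤ mutualInfo μ (fun ω => qz (π (X ω))) δ := mutualInfo_nonneg μ _ _ hB hδ
  show mutualInfo μ (fun ω => qz (Astar ω)) (fun ω => qz (π (X ω)))
      + (mutualInfo μ (fun ω => qz (π (X ω))) (fun ω => qz (π (Xtil ω)))
        - mutualInfo μ (fun ω => qz (π (X ω))) δ)
    ≤ da * Real.log (2 * R / s) + mutualInfo μ X Xtil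
  linarith
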